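/- Let t ≥ 4 be an integer and let G be a finite connected simple graph containing a copy of K_{t−1,t−1} as a subgraph. Then the K_{2,t}-bootstrap closure Ĝ of G is either a complete graph, a complete bipartite graph, or a complete split graph whose clique part has size exactly t − 1. -/

import Mathlib

/-- `G` contains a copy of `H` as a subgraph. -/
def HasCopy {W V : Type*} (H : SimpleGraph W) (G : SimpleGraph V) : Prop :=
  ∃ f : W → V, Function.Injective f ∧ ∀ ⦃a b : W⦄, H.Adj a b → G.Adj (f a) (f b)

/-- Adding the edge `{x, y}` to `G` creates a new copy of `H` containing that edge. -/
def CreatesCopy {W V : Type*} (H : SimpleGraph W) (G : SimpleGraph V) (x y : V) : Prop :=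
  ∃ f : W → V, Function.Injective f ∧
    (∀ ⦃a b : W⦄, H.Adj a b →
      G.Adj (f a) (f b) ∨ (f a = x ∧ f b = y) ∨ (f a = y ∧ f b = x)) ∧
    ∃ a b : W, H.Adj a b ∧ ((f a = x ∧ f b = y) ∨ (f a = y ∧ f b = x))

/-- One step of the `H`-bootstrap process: add to `G` all non-edges whose addition
creates a new copy of `H` containing them. -/
def bootStep {W V : Type*} (H : SimpleGraph W) (G : SimpleGraph V) : SimpleGraph V where
  Adj x y := G.Adj x y ∨ (¬ G.Adj x y ∧ x ≠ y ∧ CreatesCopy H G x y)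
  symm := by
    constructor
    intro x y h
    rcases h with h | ⟨hn, hne, f, hf, hmap, a, b, hab, hor⟩
    · exact Or.inl h.symm
    · exact Or.inr ⟨fun h' => hn h'.symm, hne.symm, f, hf,
        fun a b hab => by have := hmap hab; tauto, a, b, hab, hor.symm⟩
  loopless := by
    constructor
    intro x h
    rcases h with h | ⟨_, hne, _⟩
    · exact G.loopless.irrefl x h
    · exact hne rfl

def bootSeq {W V : Type*} (H : SimpleGraph W) (G : SimpleGraph V) : ℕ → SimpleGraph V
  | 0 => G
  | n + 1 => bootStep H (bootSeq H G n)

/-- The `H`-bootstrap closure of `G`: the union of the iterated bootstrap steps. -/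
def bootClosure {W V : Type*} (H : SimpleGraph W) (G : SimpleGraph V) : SimpleGraph V :=
  ⨆ n, bootSeq H G n

/-- `G` percolates in the `H`-bootstrap process, i.e. its closure is complete. -/
def Percolates {W V : Type*} (H : SimpleGraph W) (G : SimpleGraph V) : Prop :=
  bootClosure H G = ⊤

lemma bootSeq_mono {W V : Type*} (H : SimpleGraph W) (G : SimpleGraph V) :
    Monotone (bootSeq H G) := by
  apply monotone_nat_of_le_succ
  intro n x y h
  exact Or.inl h

lemma bootSeq_le_closure {W V : Type*} (H : SimpleGraph W) (G : SimpleGraph V) (n : ℕ) :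
    bootSeq H G n ≤ bootClosure H G :=
  le_iSup (bootSeq H G) n

lemma bootClosure_closed {W V : Type*} [Fintype W] (H : SimpleGraph W)
    (G : SimpleGraph V) {x y : V} (hne : x ≠ y)
    (hna : ¬ (bootClosure H G).Adj x y) :
    ¬ CreatesCopy H (bootClosure H G) x y := by
  classical
  rintro ⟨f, hf, hmap, a0, b0, hab0, hor0⟩
  have hadj : ∀ u v : V, (bootClosure H G).Adj u v → ∃ n, (bootSeq H G n).Adj u v := by
    intro u v h
    rwa [bootClosure, SimpleGraph.iSup_adj] at h
  let g : W × W → ℕ := fun p =>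
    if h : ∃ n, (bootSeq H G n).Adj (f p.1) (f p.2) then h.choose else 0
  set N : ℕ := Finset.univ.sup g with hNdef
  have hN : ∀ a b : W, (bootClosure H G).Adj (f a) (f b) → (bootSeq H G N).Adj (f a) (f b) := by
    intro a b h
    have hex := hadj _ _ h
    have h1 : (bootSeq H G (g (a, b))).Adj (f a) (f b) := by
      simp only [g, dif_pos hex]
      exact hex.choose_spec
    exact bootSeq_mono H G (Finset.le_sup (Finset.mem_univ (a, b))) h1
  have hstep : (bootSeq H G (N + 1)).Adj x y := by
    show (bootStep H (bootSeq H G N)).Adj x y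
    refine Or.inr ⟨fun h => hna (bootSeq_le_closure H G N h), hne, f, hf,
      fun a b hab => ?_, a0, b0, hab0, hor0⟩
    rcases hmap hab with h | h
    · exact Or.inl (hN a b h)
    · exact Or.inr h
  exact hna (bootSeq_le_closure H G (N + 1) hstep)

lemma closure_adj_of_common {V : Type*} [Fintype V] {t : ℕ} (ht : 4 ≤ t)
    (G : SimpleGraph V) {x u y : V} (hxu : x ≠ u)
    (S : Finset V) (hcard : t - 1 ≤ S.card)
    (hS : ∀ s ∈ S, (bootClosure (completeBipartiteGraph (Fin 2) (Fin t)) G).Adj x s ∧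
      (bootClosure (completeBipartiteGraph (Fin 2) (Fin t)) G).Adj u s)
    (huy : (bootClosure (completeBipartiteGraph (Fin 2) (Fin t)) G).Adj u y)
    (hyx : y ≠ x) :
    (bootClosure (completeBipartiteGraph (Fin 2) (Fin t)) G).Adj x y := by
  classical
  set C := bootClosure (completeBipartiteGraph (Fin 2) (Fin t)) G with hCdef
  by_contra hna
  obtain ⟨T, hTS, hTcard⟩ := Finset.exists_subset_card_eq hcard
  have hT : ∀ s ∈ T, C.Adj x s ∧ C.Adj u s := fun s hs => hS s (hTS hs)
  have hcardT : Fintype.card T = t - 1 := by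
    rw [Fintype.card_coe]; exact hTcard
  let e : Fin (t - 1) → V := fun i => ((Fintype.equivFinOfCardEq hcardT).symm i : V)
  have he_mem : ∀ i, e i ∈ T := fun i => ((Fintype.equivFinOfCardEq hcardT).symm i).2
  have he_inj : Function.Injective e := fun i j h =>
    (Fintype.equivFinOfCardEq hcardT).symm.injective (Subtype.coe_injective h)
  have hex : ∀ i, e i ≠ x := fun i => ((hT _ (he_mem i)).1).ne'
  have heu : ∀ i, e i ≠ u := fun i => ((hT _ (he_mem i)).2).ne'
  have hey : ∀ i, e i ≠ y := fun i h => hna (h ▸ (hT _ (he_mem i)).1)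
  let f : Fin 2 ⊕ Fin t → V := Sum.elim (fun i => if i = 0 then x else u)
    (fun j => if h : (j : ℕ) < t - 1 then e ⟨j, h⟩ else y)
  have hfinj : Function.Injective f := by
    rintro (i | j) (i' | j') h
    · simp only [f, Sum.elim_inl] at h
      by_cases h0 : i = 0 <;> by_cases h0' : i' = 0
      · rw [h0, h0']
      · rw [if_pos h0, if_neg h0'] at h; exact absurd h hxu
      · rw [if_neg h0, if_pos h0'] at h; exact absurd h.symm hxu
      · congr 1
        apply Fin.ext
        have hi := i.is_lt
        have hi' := i'.is_lt
        have h1 : i.val ≠ 0 := fun hh => h0 (Fin.ext hh)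
        have h2 : i'.val ≠ 0 := fun hh => h0' (Fin.ext hh)
        omega
    · exfalso
      simp only [f, Sum.elim_inl, Sum.elim_inr] at h
      split_ifs at h with h1 h2 h2
      · exact hex _ h.symm
      · exact hyx h.symm
      · exact heu _ h.symm
      · exact huy.ne' h.symm
    · exfalso
      simp only [f, Sum.elim_inl, Sum.elim_inr] at h
      split_ifs at h with h1 h2 h2
      · exact hex _ h
      · exact heu _ h
      · exact hyx h
      · exact huy.ne' h
    · simp only [f, Sum.elim_inr] at h
      split_ifs at h with h1 h2 h2
      · have hval : j.val = j'.val := congrArg (Fin.val : Fin (t-1) → ℕ) (he_inj h)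
        exact congrArg Sum.inr (Fin.ext hval)
      · exact absurd h (hey _)
      · exact absurd h.symm (hey _)
      · have hj := j.is_lt
        have hj' := j'.is_lt
        exact congrArg Sum.inr (Fin.ext (by omega))
  refine bootClosure_closed _ G (fun h => hyx h.symm) hna ⟨f, hfinj, ?_, Sum.inl 0,
    Sum.inr ⟨t - 1, by omega⟩, by simp, Or.inl ⟨by simp [f], by simp [f]⟩⟩
  rintro (i | j) (i' | j') hadj
  · simp at hadj
  · simp only [f, Sum.elim_inl, Sum.elim_inr]
    by_cases h0 : i = 0
    · rw [if_pos h0]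
      by_cases h1 : (j' : ℕ) < t - 1
      · rw [dif_pos h1]; exact Or.inl (hT _ (he_mem _)).1
      · rw [dif_neg h1]; exact Or.inr (Or.inl ⟨rfl, rfl⟩)
    · rw [if_neg h0]
      by_cases h1 : (j' : ℕ) < t - 1
      · rw [dif_pos h1]; exact Or.inl (hT _ (he_mem _)).2
      · rw [dif_neg h1]; exact Or.inl huy
  · simp only [f, Sum.elim_inl, Sum.elim_inr]
    by_cases h0 : i' = 0
    · rw [if_pos h0]
      by_cases h1 : (j : ℕ) < t - 1
      · rw [dif_pos h1]; exact Or.inl (hT _ (he_mem _)).1.symm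
      · rw [dif_neg h1]; exact Or.inr (Or.inr ⟨rfl, rfl⟩)
    · rw [if_neg h0]
      by_cases h1 : (j : ℕ) < t - 1
      · rw [dif_pos h1]; exact Or.inl (hT _ (he_mem _)).2.symm
      · rw [dif_neg h1]; exact Or.inl huy.symm
  · simp at hadj

theorem stmt_3' {V : Type*} [Fintype V] (t : ℕ) (ht : 4 ≤ t) (G : SimpleGraph V)
    (hconn : G.Connected)
    (hK : ∃ f : (Fin (t-1)) ⊕ (Fin (t-1)) → V, Function.Injective f ∧
      ∀ ⦃a b⦄, (completeBipartiteGraph (Fin (t - 1)) (Fin (t - 1))).Adj a b → G.Adj (f a) (f b)) :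
    bootClosure (completeBipartiteGraph (Fin 2) (Fin t)) G = ⊤ ∨
    (∃ A : Set V, ∀ x y : V,
      (bootClosure (completeBipartiteGraph (Fin 2) (Fin t)) G).Adj x y ↔
        ((x ∈ A ∧ y ∉ A) ∨ (x ∉ A ∧ y ∈ A))) ∨
    (∃ C : Set V, C.ncard = t - 1 ∧ ∀ x y : V,
      (bootClosure (completeBipartiteGraph (Fin 2) (Fin t)) G).Adj x y ↔
        (x ≠ y ∧ (x ∈ C ∨ y ∈ C))) := by
  classical
  set C := bootClosure (completeBipartiteGraph (Fin 2) (Fin t)) G with hCdef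
  obtain ⟨f, hf, hfadj⟩ := hK
  have hGC : G ≤ C := bootSeq_le_closure _ G 0
  set xs : Fin (t-1) → V := fun i => f (Sum.inl i) with hxsdef
  set ys : Fin (t-1) → V := fun j => f (Sum.inr j) with hysdef
  have hxy : ∀ i j, C.Adj (xs i) (ys j) := fun i j => hGC (hfadj (by simp))
  have hxs_inj : Function.Injective xs := fun i j h => Sum.inl_injective (hf h)
  have hys_inj : Function.Injective ys := fun i j h => Sum.inr_injective (hf h)
  have hxsys : ∀ i j, xs i ≠ ys j := fun i j h => Sum.inl_ne_inr (hf h)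
  obtain ⟨i0, i1, hi01⟩ : ∃ i0 i1 : Fin (t-1), i0 ≠ i1 :=
    ⟨⟨0, by omega⟩, ⟨1, by omega⟩, by intro h; have := congrArg Fin.val h; simp at this⟩
  -- A and B
  set A : Set V := {v | ∀ j, C.Adj v (ys j)} with hAdef
  set B : Set V := {v | ∀ i, C.Adj v (xs i)} with hBdef
  have hmemA : ∀ v, v ∈ A ↔ ∀ j, C.Adj v (ys j) := fun v => Iff.rfl
  have hmemB : ∀ v, v ∈ B ↔ ∀ i, C.Adj v (xs i) := fun v => Iff.rfl
  have hxsA : ∀ i, xs i ∈ A := fun i => (hmemA _).mpr (fun j => hxy i j)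
  have hysB : ∀ j, ys j ∈ B := fun j => (hmemB _).mpr (fun i => (hxy i j).symm)
  have hSYcard : (Finset.univ.image ys).card = t - 1 := by
    rw [Finset.card_image_of_injective _ hys_inj, Finset.card_univ, Fintype.card_fin]
  have hSXcard : (Finset.univ.image xs).card = t - 1 := by
    rw [Finset.card_image_of_injective _ hxs_inj, Finset.card_univ, Fintype.card_fin]
  have keyA : ∀ a ∈ A, ∀ a' ∈ A, a ≠ a' → ∀ w, C.Adj a' w → w ≠ a → C.Adj a w := by
    intro a ha a' ha' hne w hw hwa
    refine closure_adj_of_common ht G hne (Finset.univ.image ys) (le_of_eq hSYcard.symm)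
      ?_ hw hwa
    intro s hs
    obtain ⟨j, _, rfl⟩ := Finset.mem_image.mp hs
    exact ⟨(hmemA _).mp ha j, (hmemA _).mp ha' j⟩
  have keyB : ∀ b ∈ B, ∀ b' ∈ B, b ≠ b' → ∀ w, C.Adj b' w → w ≠ b → C.Adj b w := by
    intro b hb b' hb' hne w hw hwb
    refine closure_adj_of_common ht G hne (Finset.univ.image xs) (le_of_eq hSXcard.symm)
      ?_ hw hwb
    intro s hs
    obtain ⟨i, _, rfl⟩ := Finset.mem_image.mp hs
    exact ⟨(hmemB _).mp hb i, (hmemB _).mp hb' i⟩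
  have hAB : ∀ a ∈ A, ∀ b ∈ B, a ≠ b → C.Adj a b := by
    intro a ha b hb hne
    by_cases hax : ∃ i, a = xs i
    · obtain ⟨i, rfl⟩ := hax
      exact ((hmemB _).mp hb i).symm
    · push_neg at hax
      exact keyA a ha (xs i0) (hxsA i0) (hax i0) b ((hmemB _).mp hb i0).symm hne.symm
  have hstepA : ∀ a ∈ A, ∀ v, C.Adj a v → v ∈ A ∨ v ∈ B := by
    intro a ha v hv
    by_cases hvx : ∃ i, v = xs i
    · obtain ⟨i, rfl⟩ := hvx; exact Or.inl (hxsA i)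
    · push_neg at hvx
      refine Or.inr ((hmemB _).mpr (fun i => ?_))
      by_cases hai : a = xs i
      · exact (hai ▸ hv).symm
      · exact (keyA (xs i) (hxsA i) a ha (Ne.symm hai) v hv (hvx i)).symm
  have hstepB : ∀ b ∈ B, ∀ v, C.Adj b v → v ∈ A ∨ v ∈ B := by
    intro b hb v hv
    by_cases hvy : ∃ j, v = ys j
    · obtain ⟨j, rfl⟩ := hvy; exact Or.inr (hysB j)
    · push_neg at hvy
      refine Or.inl ((hmemA _).mpr (fun j => ?_))
      by_cases hbj : b = ys j
      · exact (hbj ▸ hv).symm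
      · exact (keyB (ys j) (hysB j) b hb (Ne.symm hbj) v hv (hvy j)).symm
  have hwalk : ∀ u v : V, G.Walk u v → (u ∈ A ∨ u ∈ B) → (v ∈ A ∨ v ∈ B) := by
    intro u v w
    induction w with
    | nil => exact id
    | cons h p ih =>
      intro hu
      apply ih
      rcases hu with hu | hu
      · exact hstepA _ hu _ (hGC h)
      · exact hstepB _ hu _ (hGC h)
  have hcover : ∀ v, v ∈ A ∨ v ∈ B := by
    intro v
    obtain ⟨w⟩ := hconn.preconnected (xs i0) v
    exact hwalk _ _ w (Or.inl (hxsA i0))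
  have hdich : ∀ (S : Set V), (∀ a ∈ S, ∀ a' ∈ S, a ≠ a' → ∀ w, C.Adj a' w → w ≠ a → C.Adj a w) →
      (∀ a ∈ S, ∀ a' ∈ S, a ≠ a' → ¬ C.Adj a a') ∨ (∀ a ∈ S, ∀ a' ∈ S, a ≠ a' → C.Adj a a') := by
    intro S keyS
    by_cases hedge : ∃ a1 ∈ S, ∃ a2 ∈ S, C.Adj a1 a2
    · right
      obtain ⟨a1, ha1, a2, ha2, h12⟩ := hedge
      have claim1 : ∀ a ∈ S, a ≠ a2 → C.Adj a a2 := by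
        intro a ha hne
        by_cases h : a = a1
        · exact h ▸ h12
        · exact keyS a ha a1 ha1 h a2 h12 hne.symm
      intro a ha a' ha' hne
      by_cases h' : a' = a2
      · exact h' ▸ claim1 a ha (h' ▸ hne)
      · by_cases h : a = a2
        · subst h; exact (claim1 a' ha' h').symm
        · exact (keyS a' ha' a2 ha2 h' a (claim1 a ha h).symm hne).symm
    · left
      intro a ha a' ha' _ hadj
      exact hedge ⟨a, ha, a', ha', hadj⟩
  have hdichA := hdich A keyA
  have hdichB := hdich B keyB
  have hAcard : t - 1 ≤ A.ncard := by
    have hsub : (↑(Finset.univ.image xs) : Set V) ⊆ A := by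
      intro v hv
      obtain ⟨i, _, rfl⟩ := Finset.mem_image.mp hv
      exact hxsA i
    calc t - 1 = (↑(Finset.univ.image xs) : Set V).ncard := by
          rw [Set.ncard_coe_finset, hSXcard]
      _ ≤ A.ncard := Set.ncard_le_ncard hsub (Set.toFinite A)
  have hBcard : t - 1 ≤ B.ncard := by
    have hsub : (↑(Finset.univ.image ys) : Set V) ⊆ B := by
      intro v hv
      obtain ⟨j, _, rfl⟩ := Finset.mem_image.mp hv
      exact hysB j
    calc t - 1 = (↑(Finset.univ.image ys) : Set V).ncard := by
          rw [Set.ncard_coe_finset, hSYcard]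
      _ ≤ B.ncard := Set.ncard_le_ncard hsub (Set.toFinite B)
  -- small clique lemmas
  have hsmallA : (∀ v, ¬ (v ∈ A ∧ v ∈ B)) →
      (∀ a ∈ A, ∀ a' ∈ A, a ≠ a' → C.Adj a a') →
      (¬ C.Adj (ys i0) (ys i1)) → A.ncard ≤ t - 1 := by
    intro hdisj hAcl hnB
    by_contra hbig
    push_neg at hbig
    have ha1 : xs i0 ∈ A := hxsA i0
    have hdiff : t - 1 ≤ (A \ {xs i0}).ncard := by
      have := Set.ncard_diff_singleton_add_one ha1 (Set.toFinite A)
      omega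
    set SA := (Set.toFinite (A \ {xs i0})).toFinset with hSAdef
    have hSAcard : t - 1 ≤ SA.card := by
      rwa [hSAdef, ← Set.ncard_eq_toFinset_card _ (Set.toFinite (A \ {xs i0}))]
    have hnadj : C.Adj (ys i0) (ys i1) := by
      refine closure_adj_of_common ht G (Ne.symm (hxsys i0 i0)) SA hSAcard ?_
        (hAB (xs i0) ha1 (ys i1) (hysB i1) (hxsys i0 i1)) (fun h => hi01 (hys_inj h).symm)
      intro s hs
      rw [hSAdef, Set.Finite.mem_toFinset] at hs
      obtain ⟨hsA, hs1⟩ := hs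
      constructor
      · exact (hAB s hsA (ys i0) (hysB i0) (fun h => hdisj s ⟨hsA, h ▸ hysB i0⟩)).symm
      · exact hAcl (xs i0) ha1 s hsA (fun h => hs1 (by rw [← h]; rfl))
    exact hnB hnadj
  have hsmallB : (∀ v, ¬ (v ∈ A ∧ v ∈ B)) →
      (∀ b ∈ B, ∀ b' ∈ B, b ≠ b' → C.Adj b b') →
      (¬ C.Adj (xs i0) (xs i1)) → B.ncard ≤ t - 1 := by
    intro hdisj hBcl hnA
    by_contra hbig
    push_neg at hbig
    have hb1 : ys i0 ∈ B := hysB i0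
    have hdiff : t - 1 ≤ (B \ {ys i0}).ncard := by
      have := Set.ncard_diff_singleton_add_one hb1 (Set.toFinite B)
      omega
    set SB := (Set.toFinite (B \ {ys i0})).toFinset with hSBdef
    have hSBcard : t - 1 ≤ SB.card := by
      rwa [hSBdef, ← Set.ncard_eq_toFinset_card _ (Set.toFinite (B \ {ys i0}))]
    have hnadj : C.Adj (xs i0) (xs i1) := by
      refine closure_adj_of_common ht G (hxsys i0 i0) SB hSBcard ?_
        (hAB (xs i1) (hxsA i1) (ys i0) hb1 (hxsys i1 i0)).symm
        (fun h => hi01 (hxs_inj h).symm)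
      intro s hs
      rw [hSBdef, Set.Finite.mem_toFinset] at hs
      obtain ⟨hsB, hs1⟩ := hs
      constructor
      · exact hAB (xs i0) (hxsA i0) s hsB (fun h => hdisj s ⟨h ▸ hxsA i0, hsB⟩)
      · exact hBcl (ys i0) hb1 s hsB (fun h => hs1 (by rw [← h]; rfl))
    exact hnA hnadj
  -- case analysis
  by_cases hmeet : ∃ v, v ∈ A ∧ v ∈ B
  · -- complete
    left
    obtain ⟨v, hvA, hvB⟩ := hmeet
    have huniv : ∀ w, w ≠ v → C.Adj v w := by
      intro w hw
      rcases hcover w with hwA | hwB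
      · exact (hAB w hwA v hvB hw).symm
      · exact hAB v hvA w hwB (Ne.symm hw)
    have hAedge : ∃ a1 ∈ A, ∃ a2 ∈ A, C.Adj a1 a2 := by
      by_cases h : xs i0 = v
      · refine ⟨v, hvA, xs i1, hxsA i1, huniv (xs i1) ?_⟩
        rw [← h]
        intro hh
        exact hi01 (hxs_inj hh.symm)
      · exact ⟨v, hvA, xs i0, hxsA i0, huniv (xs i0) h⟩
    have hBedge : ∃ b1 ∈ B, ∃ b2 ∈ B, C.Adj b1 b2 := by
      by_cases h : ys i0 = v
      · refine ⟨v, hvB, ys i1, hysB i1, huniv (ys i1) ?_⟩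
        rw [← h]
        intro hh
        exact hi01 (hys_inj hh.symm)
      · exact ⟨v, hvB, ys i0, hysB i0, huniv (ys i0) h⟩
    have hAcl := hdichA.resolve_left (by
      rintro hind
      obtain ⟨a1, ha1, a2, ha2, h12⟩ := hAedge
      exact hind a1 ha1 a2 ha2 h12.ne h12)
    have hBcl := hdichB.resolve_left (by
      rintro hind
      obtain ⟨b1, hb1, b2, hb2, h12⟩ := hBedge
      exact hind b1 hb1 b2 hb2 h12.ne h12)
    have hall : ∀ x y : V, x ≠ y → C.Adj x y := by
      intro x y hxy'
      rcases hcover x with hx | hx <;> rcases hcover y with hy | hy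
      · exact hAcl x hx y hy hxy'
      · exact hAB x hx y hy hxy'
      · exact (hAB y hy x hx hxy'.symm).symm
      · exact hBcl x hx y hy hxy'
    ext x y
    simp only [SimpleGraph.top_adj]
    exact ⟨fun h => h.ne, fun h => hall x y h⟩
  · push_neg at hmeet
    have hdisj : ∀ v, ¬ (v ∈ A ∧ v ∈ B) := fun v hv => hmeet v hv.1 hv.2
    rcases hdichA with hAind | hAcl <;> rcases hdichB with hBind | hBcl
    · -- both independent: complete bipartite
      right; left
      refine ⟨A, fun x y => ?_⟩
      constructor
      · intro h
        rcases hcover x with hx | hx <;> rcases hcover y with hy | hy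
        · exact absurd h (hAind x hx y hy h.ne)
        · exact Or.inl ⟨hx, fun hyA => hdisj y ⟨hyA, hy⟩⟩
        · exact Or.inr ⟨fun hxA => hdisj x ⟨hxA, hx⟩, hy⟩
        · exact absurd h (hBind x hx y hy h.ne)
      · rintro (⟨hx, hy⟩ | ⟨hx, hy⟩)
        · have hyB : y ∈ B := (hcover y).resolve_left hy
          exact hAB x hx y hyB (fun h => hdisj x ⟨hx, by rw [h]; exact hyB⟩)
        · have hxB : x ∈ B := (hcover x).resolve_left hx
          exact (hAB y hy x hxB (fun h => hdisj y ⟨hy, by rw [h]; exact hxB⟩)).symm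
    · -- A independent, B clique: split graph with clique B
      right; right
      have hBsmall : B.ncard ≤ t - 1 := hsmallB hdisj hBcl
        (hAind (xs i0) (hxsA i0) (xs i1) (hxsA i1) (fun h => hi01 (hxs_inj h)))
      refine ⟨B, le_antisymm hBsmall hBcard, fun x y => ?_⟩
      constructor
      · intro h
        refine ⟨h.ne, ?_⟩
        by_contra hcon
        push_neg at hcon
        have hx : x ∈ A := (hcover x).resolve_right hcon.1
        have hy : y ∈ A := (hcover y).resolve_right hcon.2
        exact hAind x hx y hy h.ne h
      · rintro ⟨hne, hx | hx⟩
        · rcases hcover y with hy | hy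
          · exact (hAB y hy x hx hne.symm).symm
          · exact hBcl x hx y hy hne
        · rcases hcover x with hx' | hx'
          · exact hAB x hx' y hx hne
          · exact hBcl x hx' y hx hne
    · -- A clique, B independent: split graph with clique A
      right; right
      have hAsmall : A.ncard ≤ t - 1 := hsmallA hdisj hAcl
        (hBind (ys i0) (hysB i0) (ys i1) (hysB i1) (fun h => hi01 (hys_inj h)))
      refine ⟨A, le_antisymm hAsmall hAcard, fun x y => ?_⟩
      constructor
      · intro h
        refine ⟨h.ne, ?_⟩
        by_contra hcon
        push_neg at hcon
        have hx : x ∈ B := (hcover x).resolve_left hcon.1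
        have hy : y ∈ B := (hcover y).resolve_left hcon.2
        exact hBind x hx y hy h.ne h
      · rintro ⟨hne, hx | hx⟩
        · rcases hcover y with hy | hy
          · exact hAcl x hx y hy hne
          · exact hAB x hx y hy hne
        · rcases hcover x with hx' | hx'
          · exact hAcl x hx' y hx hne
          · exact (hAB y hx x hx' hne.symm).symm
    · -- both cliques: complete
      left
      have hall : ∀ x y : V, x ≠ y → C.Adj x y := by
        intro x y hxy'
        rcases hcover x with hx | hx <;> rcases hcover y with hy | hy
        · exact hAcl x hx y hy hxy'
        · exact hAB x hx y hy hxy'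
        · exact (hAB y hy x hx hxy'.symm).symm
        · exact hBcl x hx y hy hxy'
      ext x y
      simp only [SimpleGraph.top_adj]
      exact ⟨fun h => h.ne, fun h => hall x y h⟩

theorem stmt_3 {V : Type*} [Fintype V] (t : ℕ) (ht : 4 ≤ t) (G : SimpleGraph V)
    (hconn : G.Connected)
    (hK : HasCopy (completeBipartiteGraph (Fin (t - 1)) (Fin (t - 1))) G) :
    bootClosure (completeBipartiteGraph (Fin 2) (Fin t)) G = ⊤ ∨
    (∃ A : Set V, ∀ x y : V,
      (bootClosure (completeBipartiteGraph (Fin 2) (Fin t)) G).Adj x y ↔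
        ((x ∈ A ∧ y ∉ A) ∨ (x ∉ A ∧ y ∈ A))) ∨
    (∃ C : Set V, C.ncard = t - 1 ∧ ∀ x y : V,
      (bootClosure (completeBipartiteGraph (Fin 2) (Fin t)) G).Adj x y ↔
        (x ≠ y ∧ (x ∈ C ∨ y ∈ C))) := by
  exact stmt_3' t ht G hconn hK
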